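/- Let W = ⟨S|M⟩ be a right-angled finite rank Coxeter system, let x = (x_1,…,x_n) ∈ [0,∞)^n, and suppose ψ_x is proper. Then the following are equivalent: (a) for all u, w ∈ S the function γ_{u,w}^{ψ_x} has finite support; (b) there do not exist generators r, s, t ∈ S with m_{r,s} = m_{r,t} = 2, m_{s,t} = ∞, and ψ_x(r) > 0. -/

import Mathlib

open CoxeterSystem

/-- The function `γ_{u,w}^ψ(v) = ψ(uvw) + ψ(v) − ψ(uv) − ψ(vw)`. -/
def gammaFun {W : Type*} [Group W] (ψ : W → ℝ) (u w v : W) : ℝ :=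
  ψ (u * v * w) + ψ v - ψ (u * v) - ψ (v * w)

namespace CGamma

set_option linter.unusedSectionVars false

variable {B : Type*} [DecidableEq B] {M : CoxeterMatrix B}
variable {W : Type*} [Group W] [DecidableEq W] (cs : CoxeterSystem M W)

local prefix:100 "ss" => cs.simple
local prefix:100 "π" => cs.wordProd
local prefix:100 "ℓ" => cs.length

lemma simple_comm {i j : B} (h : M i j = 2) : ss i * ss j = ss j * ss i := by
  have h2 := cs.simple_mul_simple_pow i j
  rw [h, pow_two] at h2
  have h3 : (ss i * ss j)⁻¹ = ss i * ss j := inv_eq_of_mul_eq_one_right h2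
  rw [mul_inv_rev, cs.inv_simple, cs.inv_simple] at h3
  exact h3.symm

lemma simple_conj_eq_iff (i : B) (t u : W) :
    ss i * t * ss i = u ↔ t = ss i * u * ss i := by
  constructor
  · rintro rfl
    rw [← mul_assoc, ← mul_assoc, cs.simple_mul_simple_self, one_mul, mul_assoc,
      cs.simple_mul_simple_self, mul_one]
  · rintro rfl
    rw [← mul_assoc, ← mul_assoc, cs.simple_mul_simple_self, one_mul, mul_assoc,
      cs.simple_mul_simple_self, mul_one]

/-- The function underlying Tits' reflection-sign permutation. -/
def titsFun (i : B) : W × ZMod 2 → W × ZMod 2 :=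
  fun p => (ss i * p.1 * ss i, p.2 + if p.1 = ss i then 1 else 0)

lemma titsFun_involutive (i : B) : Function.Involutive (titsFun cs i) := by
  intro p
  unfold titsFun
  have hconj : ss i * (ss i * p.1 * ss i) * ss i = p.1 := by
    rw [← mul_assoc, ← mul_assoc, cs.simple_mul_simple_self, one_mul, mul_assoc,
      cs.simple_mul_simple_self, mul_one]
  have hcond : (ss i * p.1 * ss i = ss i) ↔ (p.1 = ss i) := by
    rw [simple_conj_eq_iff cs, cs.simple_mul_simple_self, one_mul]
  have h11 : (1 + 1 : ZMod 2) = 0 := rfl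
  ext
  · simp [hconj]
  · show p.2 + (if p.1 = ss i then 1 else 0)
        + (if ss i * p.1 * ss i = ss i then 1 else 0) = p.2
    by_cases h : p.1 = ss i
    · rw [if_pos h, if_pos (hcond.mpr h), add_assoc, h11, add_zero]
    · rw [if_neg h, if_neg (hcond.not.mpr h), add_zero, add_zero]

/-- Tits' permutation associated to a simple generator. -/
def titsPerm (i : B) : Equiv.Perm (W × ZMod 2) :=
  (titsFun_involutive cs i).toPerm _

lemma titsPerm_apply (i : B) (p : W × ZMod 2) :
    titsPerm cs i p = (ss i * p.1 * ss i, p.2 + if p.1 = ss i then 1 else 0) := rfl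

lemma titsPerm_liftable (hra : ∀ i j : B, i ≠ j → M i j = 2 ∨ M i j = 0) :
    CoxeterMatrix.IsLiftable M (fun i => titsPerm cs i) := by
  intro i j
  by_cases hij : i = j
  · subst hij
    rw [M.diagonal, pow_one]
    ext p
    · exact congrArg Prod.fst (titsFun_involutive cs i p)
    · exact congrArg Prod.snd (titsFun_involutive cs i p)
  · rcases hra i j hij with h2 | h0
    · -- commuting case
      have hc := simple_comm cs h2
      have hji : ss j * ss i * ss j = ss i := by
        rw [← hc, mul_assoc, cs.simple_mul_simple_self, mul_one]
      have hij' : ss i * ss j * ss i = ss j := by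
        rw [hc, mul_assoc, cs.simple_mul_simple_self, mul_one]
      have hcomm : titsPerm cs i * titsPerm cs j = titsPerm cs j * titsPerm cs i := by
        ext p
        · show (titsPerm cs i (titsPerm cs j p)).1 = (titsPerm cs j (titsPerm cs i p)).1
          simp only [titsPerm_apply]
          have e1 : ss i * (ss j * p.1 * ss j) * ss i = (ss i * ss j) * p.1 * (ss j * ss i) := by
            group
          have e2 : ss j * (ss i * p.1 * ss i) * ss j = (ss j * ss i) * p.1 * (ss i * ss j) := by
            group
          rw [e1, e2, hc]
        · show (titsPerm cs i (titsPerm cs j p)).2 = (titsPerm cs j (titsPerm cs i p)).2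
          simp only [titsPerm_apply]
          have c1 : (ss j * p.1 * ss j = ss i) ↔ (p.1 = ss i) := by
            rw [simple_conj_eq_iff cs, hji]
          have c2 : (ss i * p.1 * ss i = ss j) ↔ (p.1 = ss j) := by
            rw [simple_conj_eq_iff cs, hij']
          simp only [c1, c2]
          ring
      have hsq : ∀ k : B, titsPerm cs k * titsPerm cs k = 1 := by
        intro k
        ext p
        · exact congrArg Prod.fst (titsFun_involutive cs k p)
        · exact congrArg Prod.snd (titsFun_involutive cs k p)
      rw [h2, pow_two, show (titsPerm cs i * titsPerm cs j) * (titsPerm cs i * titsPerm cs j)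
          = titsPerm cs i * (titsPerm cs j * titsPerm cs i) * titsPerm cs j by group, ← hcomm]
      rw [show titsPerm cs i * (titsPerm cs i * titsPerm cs j) * titsPerm cs j
          = (titsPerm cs i * titsPerm cs i) * (titsPerm cs j * titsPerm cs j) by group,
        hsq, hsq, one_mul]
    · rw [h0, pow_zero]


lemma lis_cons (i : B) (ω : List B) :
    cs.leftInvSeq (i :: ω) = ss i :: List.map (MulAut.conj (ss i)) (cs.leftInvSeq ω) := rfl

section Exchange

variable (hra : ∀ i j : B, i ≠ j → M i j = 2 ∨ M i j = 0)

include hra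

/-- The Tits homomorphism used to prove the exchange property. -/
noncomputable def titsHom : W →* Equiv.Perm (W × ZMod 2) :=
  cs.lift ⟨fun i => titsPerm cs i, titsPerm_liftable cs hra⟩

lemma titsHom_simple (i : B) : titsHom cs hra (ss i) = titsPerm cs i :=
  cs.lift_apply_simple (titsPerm_liftable cs hra) i

lemma titsHom_wordProd_inv (ω : List B) (t : W) (ε : ZMod 2) :
    titsHom cs hra ((π ω)⁻¹) (t, ε) =
      ((π ω)⁻¹ * t * π ω, ε + ((cs.leftInvSeq ω).count t : ZMod 2)) := by
  induction ω generalizing t ε with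
  | nil => simp
  | cons i ω ih =>
    have hmapcount : (List.map (⇑(MulAut.conj (ss i))) (cs.leftInvSeq ω)).count t
        = (cs.leftInvSeq ω).count (ss i * t * ss i) := by
      have hinj : Function.Injective (⇑(MulAut.conj (ss i))) := (MulAut.conj (ss i)).injective
      have ht : t = (MulAut.conj (ss i)) (ss i * t * ss i) := by
        simp only [MulAut.conj_apply, cs.inv_simple]
        rw [← mul_assoc, ← mul_assoc, cs.simple_mul_simple_self, one_mul, mul_assoc,
          cs.simple_mul_simple_self, mul_one]
      rw [ht, List.count_map_of_injective _ _ hinj, ← ht]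
    rw [cs.wordProd_cons, mul_inv_rev, cs.inv_simple, map_mul, Equiv.Perm.mul_apply,
      titsHom_simple, titsPerm_apply, ih, lis_cons]
    refine Prod.ext ?_ ?_
    · show (π ω)⁻¹ * (ss i * t * ss i) * π ω = (π ω)⁻¹ * ss i * t * (ss i * π ω)
      group
    · show ε + (if t = ss i then 1 else 0) + ((cs.leftInvSeq ω).count (ss i * t * ss i) : ℕ)
        = ε + (((ss i :: List.map (⇑(MulAut.conj (ss i))) (cs.leftInvSeq ω)).count t : ℕ) : ZMod 2)
      rw [List.count_cons, hmapcount]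
      push_cast
      by_cases h : t = ss i
      · simp [h]
        ring
      · rw [if_neg h]
        simp only [beq_iff_eq, if_neg (Ne.symm h)]
        ring

lemma count_lis_parity {ω₁ ω₂ : List B} (h : π ω₁ = π ω₂) (t : W) :
    (((cs.leftInvSeq ω₁).count t : ℕ) : ZMod 2) = (((cs.leftInvSeq ω₂).count t : ℕ) : ZMod 2) := by
  have h1 := titsHom_wordProd_inv cs hra ω₁ t 0
  have h2 := titsHom_wordProd_inv cs hra ω₂ t 0
  rw [h] at h1
  rw [h1] at h2
  have h3 := ((Prod.mk.injEq _ _ _ _).mp h2).2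
  rwa [zero_add, zero_add] at h3

lemma exchange_left {ω : List B} (hω : cs.IsReduced ω) {i : B}
    (hd : ℓ (ss i * π ω) < ℓ (π ω)) :
    ∃ j, j < ω.length ∧ ss i * π ω = π (ω.eraseIdx j) := by
  obtain ⟨ω', hω', hprod⟩ := cs.exists_reduced_word' (ss i * π ω)
  have hlen' : ω'.length + 1 = ℓ (π ω) := by
    rcases cs.length_simple_mul (π ω) i with hup | hdown
    · omega
    · have : ℓ (π ω') = ω'.length := hω'
      rw [← hprod] at this
      omega
  have hπ : π (i :: ω') = π ω := by
    rw [cs.wordProd_cons, ← hprod, ← mul_assoc, cs.simple_mul_simple_self, one_mul]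
  have hred : cs.IsReduced (i :: ω') := by
    show ℓ (π (i :: ω')) = (i :: ω').length
    rw [hπ, List.length_cons]
    omega
  have hmem : ss i ∈ cs.leftInvSeq (i :: ω') := by
    rw [lis_cons]
    exact List.mem_cons_self
  have hcount1 : (cs.leftInvSeq (i :: ω')).count (ss i) = 1 :=
    List.count_eq_one_of_mem hred.nodup_leftInvSeq hmem
  have hpar := count_lis_parity cs hra hπ (ss i)
  rw [hcount1] at hpar
  have hmem2 : ss i ∈ cs.leftInvSeq ω := by
    by_contra hn
    rw [List.count_eq_zero_of_not_mem hn] at hpar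
    simp at hpar
  obtain ⟨j, hj, hget⟩ := List.mem_iff_getElem.mp hmem2
  have hjl : j < ω.length := by
    have := cs.length_leftInvSeq ω
    omega
  refine ⟨j, hjl, ?_⟩
  have hkey := cs.getD_leftInvSeq_mul_wordProd ω j
  rw [List.getD_eq_getElem _ _ hj, hget] at hkey
  exact hkey


end Exchange

/-! ### Lists and eraseIdx -/

lemma eraseIdx_append_left {α : Type*} (l₁ l₂ : List α) {j : ℕ} (hj : j < l₁.length) :
    (l₁ ++ l₂).eraseIdx j = l₁.eraseIdx j ++ l₂ := by
  induction l₁ generalizing j with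
  | nil => simp at hj
  | cons x l ih =>
    cases j with
    | zero => simp
    | succ j =>
      simp only [List.cons_append, List.eraseIdx_cons_succ]
      rw [ih (by simpa using hj)]

lemma eraseIdx_append_right {α : Type*} (l₁ l₂ : List α) {j : ℕ} (hj : l₁.length ≤ j) :
    (l₁ ++ l₂).eraseIdx j = l₁ ++ l₂.eraseIdx (j - l₁.length) := by
  induction l₁ generalizing j with
  | nil => simp
  | cons x l ih =>
    cases j with
    | zero => simp at hj
    | succ j =>
      simp only [List.cons_append, List.eraseIdx_cons_succ, List.length_cons]
      rw [ih (by simpa using hj)]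
      simp [Nat.succ_sub_succ]

/-! ### The infinite dihedral quotient -/

/-- Alternating word starting with `a`. -/
def altL (a b : B) : ℕ → List B
  | 0 => []
  | (k+1) => a :: altL b a k

@[simp] lemma altL_zero (a b : B) : altL a b 0 = [] := rfl

lemma altL_succ (a b : B) (k : ℕ) : altL a b (k+1) = a :: altL b a k := rfl

lemma length_altL (a b : B) (k : ℕ) : (altL a b k).length = k := by
  induction k generalizing a b with
  | zero => rfl
  | succ k ih => simp [altL_succ, ih]

/-- The negation permutation of `ℤ`. -/
def negPerm : Equiv.Perm ℤ := Equiv.neg ℤ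

/-- The reflection `x ↦ 1 - x` of `ℤ`. -/
def refPerm : Equiv.Perm ℤ := (Equiv.neg ℤ).trans (Equiv.addLeft 1)

@[simp] lemma negPerm_apply (x : ℤ) : negPerm x = -x := rfl

@[simp] lemma refPerm_apply (x : ℤ) : refPerm x = 1 + -x := rfl

lemma negPerm_sq : negPerm * negPerm = 1 := by
  ext x
  simp [Equiv.Perm.mul_apply]

lemma refPerm_sq : refPerm * refPerm = 1 := by
  ext x
  simp [Equiv.Perm.mul_apply]

/-- The map sending `a`, `b` to the generators of an infinite dihedral group. -/
def dihF (a b : B) : B → Equiv.Perm ℤ :=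
  fun i => if i = a then negPerm else if i = b then refPerm else 1

lemma dihF_sq (a b i : B) : dihF a b i * dihF a b i = 1 := by
  unfold dihF
  split
  · exact negPerm_sq
  · split
    · exact refPerm_sq
    · simp

lemma dihF_liftable (hra : ∀ i j : B, i ≠ j → M i j = 2 ∨ M i j = 0)
    {a b : B} (h0 : M a b = 0) :
    CoxeterMatrix.IsLiftable M (dihF a b) := by
  intro i j
  by_cases hij : i = j
  · subst hij
    rw [M.diagonal, pow_one, dihF_sq]
  · rcases hra i j hij with h2 | hz
    · have hone : dihF a b i = 1 ∨ dihF a b j = 1 := by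
        by_contra hcon
        push_neg at hcon
        obtain ⟨hi, hj⟩ := hcon
        have hiab : i = a ∨ i = b := by
          by_contra hc
          push_neg at hc
          simp [dihF, hc.1, hc.2] at hi
        have hjab : j = a ∨ j = b := by
          by_contra hc
          push_neg at hc
          simp [dihF, hc.1, hc.2] at hj
        rcases hiab with rfl | rfl <;> rcases hjab with rfl | rfl
        · exact hij rfl
        · rw [h0] at h2; omega
        · rw [M.symmetric, h0] at h2; omega
        · exact hij rfl
      rw [h2, pow_two]
      rcases hone with h1 | h1
      · rw [h1, one_mul, dihF_sq]
      · rw [h1, mul_one, dihF_sq]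
    · rw [hz, pow_zero]

/-- The homomorphism onto the infinite dihedral group. -/
noncomputable def dihHom (hra : ∀ i j : B, i ≠ j → M i j = 2 ∨ M i j = 0)
    {a b : B} (h0 : M a b = 0) : W →* Equiv.Perm ℤ :=
  cs.lift ⟨dihF a b, dihF_liftable hra h0⟩

lemma dihHom_simple (hra : ∀ i j : B, i ≠ j → M i j = 2 ∨ M i j = 0)
    {a b : B} (h0 : M a b = 0) (i : B) :
    dihHom cs hra h0 (ss i) = dihF a b i :=
  cs.lift_apply_simple (dihF_liftable hra h0) i

/-- The `σ`-invariant of an affine permutation. -/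
def sigZ (g : Equiv.Perm ℤ) : ℤ := g 0 + g 1 - (if g 1 - g 0 = 1 then 1 else 0)

lemma dih_word_bound (hra : ∀ i j : B, i ≠ j → M i j = 2 ∨ M i j = 0)
    {a b : B} (h0 : M a b = 0) (ω : List B) :
    (dihHom cs hra h0 (π ω) 1 - dihHom cs hra h0 (π ω) 0 = 1 ∨
     dihHom cs hra h0 (π ω) 1 - dihHom cs hra h0 (π ω) 0 = -1) ∧
    (sigZ (dihHom cs hra h0 (π ω))).natAbs ≤ ω.length := by
  induction ω with
  | nil => simp [sigZ]
  | cons i ω ih =>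
    obtain ⟨hε, hb⟩ := ih
    rw [cs.wordProd_cons, map_mul, dihHom_simple cs hra h0]
    set g := dihHom cs hra h0 (π ω) with hg
    have hba : ¬ b = a := by
      rintro rfl
      rw [M.diagonal] at h0
      omega
    have hAa : dihF a b a = negPerm := by simp [dihF]
    have hAb : dihF a b b = refPerm := by simp [dihF, hba]
    unfold sigZ at hb ⊢
    by_cases hia : i = a
    · rw [hia, hAa]
      simp only [Equiv.Perm.mul_apply, negPerm_apply, List.length_cons]
      constructor
      · omega
      · split_ifs at hb ⊢ <;> omega
    · by_cases hib : i = b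
      · rw [hib, hAb]
        simp only [Equiv.Perm.mul_apply, refPerm_apply, List.length_cons]
        constructor
        · omega
        · split_ifs at hb ⊢ <;> omega
      · have hA1 : dihF a b i = 1 := by simp [dihF, hia, hib]
        rw [hA1]
        simp only [one_mul, List.length_cons]
        exact ⟨hε, by omega⟩

lemma dih_alt_values (hra : ∀ i j : B, i ≠ j → M i j = 2 ∨ M i j = 0)
    {a b : B} (h0 : M a b = 0) (k : ℕ) :
    (∃ j : ℤ, 2*j = k ∧
      dihHom cs hra h0 (π (altL a b k)) 0 = -j ∧ dihHom cs hra h0 (π (altL a b k)) 1 = -j+1 ∧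
      dihHom cs hra h0 (π (altL b a k)) 0 = j ∧ dihHom cs hra h0 (π (altL b a k)) 1 = j+1) ∨
    (∃ j : ℤ, 2*j+1 = k ∧
      dihHom cs hra h0 (π (altL a b k)) 0 = -j ∧ dihHom cs hra h0 (π (altL a b k)) 1 = -j-1 ∧
      dihHom cs hra h0 (π (altL b a k)) 0 = j+1 ∧ dihHom cs hra h0 (π (altL b a k)) 1 = j) := by
  have hba : ¬ b = a := by
    rintro rfl
    rw [M.diagonal] at h0
    omega
  have hAa : dihF a b a = negPerm := by simp [dihF]
  have hAb : dihF a b b = refPerm := by simp [dihF, hba]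
  induction k with
  | zero =>
    left
    refine ⟨0, by norm_num, ?_, ?_, ?_, ?_⟩ <;> simp
  | succ k ih =>
    have e1 : π (altL a b (k+1)) = ss a * π (altL b a k) := by
      rw [altL_succ, cs.wordProd_cons]
    have e2 : π (altL b a (k+1)) = ss b * π (altL a b k) := by
      rw [altL_succ, cs.wordProd_cons]
    rw [e1, e2, map_mul, map_mul, dihHom_simple cs hra h0, dihHom_simple cs hra h0, hAa, hAb]
    rcases ih with ⟨j, hk, h1, h2, h3, h4⟩ | ⟨j, hk, h1, h2, h3, h4⟩
    · right
      refine ⟨j, by omega, ?_, ?_, ?_, ?_⟩ <;>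
        simp only [Equiv.Perm.mul_apply, negPerm_apply, refPerm_apply, h1, h2, h3, h4] <;> omega
    · left
      refine ⟨j+1, by omega, ?_, ?_, ?_, ?_⟩ <;>
        simp only [Equiv.Perm.mul_apply, negPerm_apply, refPerm_apply, h1, h2, h3, h4] <;> omega

lemma dih_alt_sig (hra : ∀ i j : B, i ≠ j → M i j = 2 ∨ M i j = 0)
    {a b : B} (h0 : M a b = 0) (k : ℕ) :
    (sigZ (dihHom cs hra h0 (π (altL a b k)))).natAbs = k ∧
    (sigZ (dihHom cs hra h0 (π (altL b a k)))).natAbs = k := by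
  rcases dih_alt_values cs hra h0 k with ⟨j, hk, h1, h2, h3, h4⟩ | ⟨j, hk, h1, h2, h3, h4⟩ <;>
    unfold sigZ <;>
    rw [h1, h2, h3, h4] <;>
    constructor <;>
    split_ifs <;>
    omega



lemma dih_step (hra : ∀ i j : B, i ≠ j → M i j = 2 ∨ M i j = 0)
    {a b : B} (hab : a ≠ b) (h0 : M a b = 0) {y z : W} {k : ℕ}
    (hdb : ℓ (ss b * y) < ℓ y)
    (hy : y = π (altL a b k) * z) (hlen : ℓ z + k = ℓ y) :
    ∃ z', ℓ z' + (k+1) = ℓ y ∧ y = π (altL b a (k+1)) * z' := by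
  obtain ⟨ωz, hωz, hz⟩ := cs.exists_reduced_word' z
  have hlz : ωz.length = ℓ z := hωz.symm ▸ (hz ▸ rfl)
  set ω := altL a b k ++ ωz with hω
  have hπω : π ω = y := by rw [hω, cs.wordProd_append, ← hz, ← hy]
  have hlω : ω.length = ℓ y := by
    rw [hω, List.length_append, length_altL]
    omega
  have hred : cs.IsReduced ω := by
    show ℓ (π ω) = ω.length
    rw [hπω, hlω]
  obtain ⟨j, hj, hex⟩ := exchange_left cs hra hred (by rw [hπω]; exact hdb)
  rw [hπω] at hex
  by_cases hjk : j < k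
  · exfalso
    rw [hω, eraseIdx_append_left _ _ (by rw [length_altL]; exact hjk),
      cs.wordProd_append, ← hz] at hex
    rw [hy, ← mul_assoc] at hex
    have hcancel : ss b * π (altL a b k) = π ((altL a b k).eraseIdx j) :=
      mul_right_cancel hex
    have hL : ss b * π (altL a b k) = π (altL b a (k+1)) := by
      rw [altL_succ, cs.wordProd_cons]
    rw [hL] at hcancel
    have h1 := (dih_alt_sig cs hra h0 (k+1)).2
    rw [hcancel] at h1
    have h2 := (dih_word_bound cs hra h0 ((altL a b k).eraseIdx j)).2
    have hle : ((altL a b k).eraseIdx j).length + 1 = k := by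
      have := List.length_eraseIdx_add_one (l := altL a b k) (i := j)
        (by rw [length_altL]; exact hjk)
      rw [length_altL] at this
      exact this
    omega
  · push_neg at hjk
    rw [hω, eraseIdx_append_right _ _ (by rw [length_altL]; exact hjk),
      cs.wordProd_append] at hex
    set z' := π (ωz.eraseIdx (j - (altL a b k).length)) with hz'
    have hy' : y = π (altL b a (k+1)) * z' := by
      rw [altL_succ, cs.wordProd_cons, mul_assoc, ← hex, ← mul_assoc,
        cs.simple_mul_simple_self, one_mul]
    refine ⟨z', ?_, hy'⟩
    have h1 : ℓ z' ≤ (ωz.eraseIdx (j - (altL a b k).length)).length :=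
      cs.length_wordProd_le _
    have h2 : ℓ y ≤ (k+1) + ℓ z' := by
      rw [hy']
      have ha := cs.length_mul_le (π (altL b a (k+1))) z'
      have hb2 := cs.length_wordProd_le (altL b a (k+1))
      rw [length_altL] at hb2
      omega
    have hjlt : j - (altL a b k).length < ωz.length := by
      rw [length_altL]
      rw [hlω] at hj
      omega
    have h3 := List.length_eraseIdx_add_one hjlt
    rw [length_altL] at h1 h3
    omega

lemma no_two_descents (hra : ∀ i j : B, i ≠ j → M i j = 2 ∨ M i j = 0)
    {a b : B} (hab : a ≠ b) (h0 : M a b = 0) {y : W}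
    (hda : ℓ (ss a * y) < ℓ y) (hdb : ℓ (ss b * y) < ℓ y) : False := by
  have h0' : M b a = 0 := by rw [M.symmetric]; exact h0
  have claim : ∀ k, k ≤ ℓ y →
      ∃ z, ℓ z + k = ℓ y ∧ (y = π (altL a b k) * z ∨ y = π (altL b a k) * z) := by
    intro k
    induction k with
    | zero => exact fun _ => ⟨y, by simp, Or.inl (by simp)⟩
    | succ k ih =>
      intro hk1
      obtain ⟨z, hlen, hcase⟩ := ih (by omega)
      rcases hcase with hy | hy
      · obtain ⟨z', hlen', hy'⟩ := dih_step cs hra hab h0 hdb hy hlen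
        exact ⟨z', hlen', Or.inr hy'⟩
      · obtain ⟨z', hlen', hy'⟩ := dih_step cs hra hab.symm h0' hda hy hlen
        exact ⟨z', hlen', Or.inl hy'⟩
  obtain ⟨z, hlen, hcase⟩ := claim (ℓ y) le_rfl
  rcases hcase with hy | hy
  · obtain ⟨z', hlen', _⟩ := dih_step cs hra hab h0 hdb hy hlen
    omega
  · obtain ⟨z', hlen', _⟩ := dih_step cs hra hab.symm h0' hda hy hlen
    omega


section Psi

variable [Fintype B] {x : B → ℝ} {ψ : W → ℝ}

lemma psi_cons (hψ : ∀ ω : List B, cs.IsReduced ω →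
      ψ (cs.wordProd ω) = ∑ i : B, x i * (ω.count i : ℝ))
    {ω : List B} {i : B} (hred : cs.IsReduced (i :: ω)) (hredω : cs.IsReduced ω) :
    ψ (π (i :: ω)) = ψ (π ω) + x i := by
  rw [hψ _ hred, hψ _ hredω]
  have hcount : ∀ j : B, ((i :: ω).count j : ℝ) = (ω.count j : ℝ) + if j = i then 1 else 0 := by
    intro j
    rw [List.count_cons]
    by_cases h : j = i
    · simp [h]
    · simp [h, Ne.symm h]
  have : ∀ j ∈ Finset.univ, x j * ((i :: ω).count j : ℝ)
      = x j * (ω.count j : ℝ) + (if j = i then x j else 0) := by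
    intro j _
    rw [hcount j]
    by_cases h : j = i <;> simp [h] <;> ring
  rw [Finset.sum_congr rfl this, Finset.sum_add_distrib, Finset.sum_ite_eq' Finset.univ i x]
  simp

lemma psi_one (hψ : ∀ ω : List B, cs.IsReduced ω →
      ψ (cs.wordProd ω) = ∑ i : B, x i * (ω.count i : ℝ)) : ψ 1 = 0 := by
  have h := hψ [] (by simp [CoxeterSystem.IsReduced])
  simpa using h

lemma psi_simple (hψ : ∀ ω : List B, cs.IsReduced ω →
      ψ (cs.wordProd ω) = ∑ i : B, x i * (ω.count i : ℝ)) (i : B) : ψ (ss i) = x i := by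
  have hred : cs.IsReduced [i] := by
    show ℓ (π [i]) = _
    simp [cs.length_simple]
  have h := psi_cons cs hψ (ω := []) hred (by simp [CoxeterSystem.IsReduced])
  rw [cs.wordProd_singleton] at h
  rw [h, cs.wordProd_nil, psi_one cs hψ, zero_add]

lemma psi_simple_mul_asc (hψ : ∀ ω : List B, cs.IsReduced ω →
      ψ (cs.wordProd ω) = ∑ i : B, x i * (ω.count i : ℝ))
    {v : W} {i : B} (h : ℓ (ss i * v) = ℓ v + 1) :
    ψ (ss i * v) = ψ v + x i := by
  obtain ⟨ω, hω, hv⟩ := cs.exists_reduced_word' v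
  have hred : cs.IsReduced (i :: ω) := by
    show ℓ (π (i :: ω)) = _
    rw [cs.wordProd_cons, ← hv, h, List.length_cons]
    rw [hv, hω]
  have := psi_cons cs hψ hred hω
  rw [cs.wordProd_cons, ← hv] at this
  exact this

lemma psi_simple_mul_desc (hψ : ∀ ω : List B, cs.IsReduced ω →
      ψ (cs.wordProd ω) = ∑ i : B, x i * (ω.count i : ℝ))
    {v : W} {i : B} (h : ℓ (ss i * v) + 1 = ℓ v) :
    ψ (ss i * v) = ψ v - x i := by
  have hcan : ss i * (ss i * v) = v := cs.simple_mul_simple_cancel_left i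
  have h' : ℓ (ss i * (ss i * v)) = ℓ (ss i * v) + 1 := by rw [hcan]; omega
  have := psi_simple_mul_asc cs hψ h'
  rw [hcan] at this
  rw [this]
  ring

lemma psi_simple_mul (hψ : ∀ ω : List B, cs.IsReduced ω →
      ψ (cs.wordProd ω) = ∑ i : B, x i * (ω.count i : ℝ)) (v : W) (i : B) :
    ψ (ss i * v) = ψ v + x i ∨ ψ (ss i * v) = ψ v - x i := by
  rcases cs.length_simple_mul v i with h | h
  · exact Or.inl (psi_simple_mul_asc cs hψ h)
  · exact Or.inr (psi_simple_mul_desc cs hψ h)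

lemma psi_mul_simple_asc (hψ : ∀ ω : List B, cs.IsReduced ω →
      ψ (cs.wordProd ω) = ∑ i : B, x i * (ω.count i : ℝ))
    {v : W} {i : B} (h : ℓ (v * ss i) = ℓ v + 1) :
    ψ (v * ss i) = ψ v + x i := by
  obtain ⟨ω, hω, hv⟩ := cs.exists_reduced_word' v
  have hπ : π (ω ++ [i]) = v * ss i := by
    rw [cs.wordProd_append, cs.wordProd_singleton, ← hv]
  have hred : cs.IsReduced (ω ++ [i]) := by
    show ℓ (π (ω ++ [i])) = _
    rw [hπ, h, List.length_append, List.length_singleton]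
    rw [hv, hω]
  have h1 := hψ _ hred
  have h2 := hψ _ hω
  rw [hπ] at h1
  rw [← hv] at h2
  rw [h1, h2]
  have hcount : ∀ j ∈ Finset.univ, x j * ((ω ++ [i]).count j : ℝ)
      = x j * (ω.count j : ℝ) + (if j = i then x j else 0) := by
    intro j _
    rw [List.count_append]
    by_cases h : j = i
    · simp [h]
      ring
    · simp [h, Ne.symm h]
  rw [Finset.sum_congr rfl hcount, Finset.sum_add_distrib, Finset.sum_ite_eq' Finset.univ i x]
  simp

lemma psi_mul_simple_desc (hψ : ∀ ω : List B, cs.IsReduced ω →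
      ψ (cs.wordProd ω) = ∑ i : B, x i * (ω.count i : ℝ))
    {v : W} {i : B} (h : ℓ (v * ss i) + 1 = ℓ v) :
    ψ (v * ss i) = ψ v - x i := by
  have hcan : (v * ss i) * ss i = v := cs.simple_mul_simple_cancel_right i
  have h' : ℓ ((v * ss i) * ss i) = ℓ (v * ss i) + 1 := by rw [hcan]; omega
  have := psi_mul_simple_asc cs hψ h'
  rw [hcan] at this
  rw [this]
  ring

lemma psi_mul_simple (hψ : ∀ ω : List B, cs.IsReduced ω →
      ψ (cs.wordProd ω) = ∑ i : B, x i * (ω.count i : ℝ)) (v : W) (i : B) :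
    ψ (v * ss i) = ψ v + x i ∨ ψ (v * ss i) = ψ v - x i := by
  rcases cs.length_mul_simple v i with h | h
  · exact Or.inl (psi_mul_simple_asc cs hψ h)
  · exact Or.inr (psi_mul_simple_desc cs hψ h)

lemma psi_le (hx : ∀ i : B, 0 ≤ x i)
    (hψ : ∀ ω : List B, cs.IsReduced ω →
      ψ (cs.wordProd ω) = ∑ i : B, x i * (ω.count i : ℝ)) (v : W) :
    ψ v ≤ (ℓ v : ℝ) * ∑ i : B, x i := by
  obtain ⟨ω, hω, hv⟩ := cs.exists_reduced_word' v
  rw [hv, hψ _ hω]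
  have hl : ℓ (π ω) = ω.length := hω
  rw [hl]
  have hlen : ∀ j : B, (ω.count j : ℝ) ≤ (ω.length : ℝ) := by
    intro j
    exact_mod_cast List.count_le_length (l := ω) (a := j)
  calc ∑ i : B, x i * (ω.count i : ℝ) ≤ ∑ i : B, x i * (ω.length : ℝ) := by
        apply Finset.sum_le_sum
        intro i _
        exact mul_le_mul_of_nonneg_left (hlen i) (hx i)
  _ = (ω.length : ℝ) * ∑ i : B, x i := by
        rw [Finset.mul_sum]
        apply Finset.sum_congr rfl
        intro i _
        ring

end Psi


/-! ### Wall-crossing lemmas -/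

lemma desc_asc_eq (hra : ∀ i j : B, i ≠ j → M i j = 2 ∨ M i j = 0) {u w : B} {v : W}
    (hd : ℓ (ss u * v) + 1 = ℓ v) (ha : ℓ (ss u * (v * ss w)) = ℓ (v * ss w) + 1) :
    ss u * v = v * ss w := by
  rcases cs.length_mul_simple v w with hvw | hvw
  · exfalso
    have h2 : ℓ ((ss u * v) * ss w) ≤ ℓ (ss u * v) + 1 := by
      have := cs.length_mul_le (ss u * v) (ss w)
      rw [cs.length_simple] at this
      exact this
    rw [mul_assoc] at h2
    omega
  · obtain ⟨ω', hω', hvw'⟩ := cs.exists_reduced_word' (v * ss w)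
    have hπ : π (ω' ++ [w]) = v := by
      rw [cs.wordProd_append, cs.wordProd_singleton, ← hvw',
        cs.simple_mul_simple_cancel_right]
    have hlenω' : ω'.length + 1 = ℓ v := by
      have h1 : ℓ (π ω') = ω'.length := hω'
      rw [← hvw'] at h1
      omega
    have hred : cs.IsReduced (ω' ++ [w]) := by
      show ℓ (π (ω' ++ [w])) = _
      rw [hπ, List.length_append, List.length_singleton]
      omega
    obtain ⟨j, hj, hex⟩ := exchange_left cs hra (i := u) hred (by rw [hπ]; omega)
    rw [hπ] at hex
    by_cases hjl : j < ω'.length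
    · exfalso
      rw [eraseIdx_append_left _ _ hjl, cs.wordProd_append, cs.wordProd_singleton] at hex
      have h3 : ss u * (v * ss w) = π (ω'.eraseIdx j) := by
        rw [← mul_assoc, hex, cs.simple_mul_simple_cancel_right]
      have h4 : ℓ (π (ω'.eraseIdx j)) ≤ (ω'.eraseIdx j).length := cs.length_wordProd_le _
      have h5 := List.length_eraseIdx_add_one hjl
      rw [h3] at ha
      omega
    · have hje : j = ω'.length := by
        rw [List.length_append, List.length_singleton] at hj
        omega
      rw [eraseIdx_append_right _ _ (by omega), hje, Nat.sub_self] at hex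
      simp only [List.eraseIdx, List.append_nil] at hex
      rw [hex, ← hvw']

lemma descent_match (hra : ∀ i j : B, i ≠ j → M i j = 2 ∨ M i j = 0) {u w : B} {v : W}
    (hne : ss u * v ≠ v * ss w) :
    (ℓ (ss u * v) = ℓ v + 1 ↔ ℓ (ss u * (v * ss w)) = ℓ (v * ss w) + 1) := by
  constructor
  · intro hasc
    by_contra hn
    have hd : ℓ (ss u * (v * ss w)) + 1 = ℓ (v * ss w) :=
      (cs.length_simple_mul (v * ss w) u).resolve_left hn
    have ha' : ℓ (ss u * ((v * ss w) * ss w)) = ℓ ((v * ss w) * ss w) + 1 := by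
      rw [cs.simple_mul_simple_cancel_right]
      exact hasc
    have heq := desc_asc_eq cs hra hd ha'
    rw [cs.simple_mul_simple_cancel_right] at heq
    apply hne
    calc ss u * v = ss u * (ss u * (v * ss w)) := by rw [heq]
    _ = v * ss w := cs.simple_mul_simple_cancel_left _
  · intro hasc
    by_contra hn
    have hd : ℓ (ss u * v) + 1 = ℓ v := (cs.length_simple_mul v u).resolve_left hn
    exact hne (desc_asc_eq cs hra hd hasc)

section Gamma

variable [Fintype B] {x : B → ℝ} {ψ : W → ℝ}

lemma gamma_eq_zero_of_ne (hra : ∀ i j : B, i ≠ j → M i j = 2 ∨ M i j = 0)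
    (hψ : ∀ ω : List B, cs.IsReduced ω →
      ψ (cs.wordProd ω) = ∑ i : B, x i * (ω.count i : ℝ))
    {u w : B} {v : W} (hne : ss u * v ≠ v * ss w) :
    gammaFun ψ (ss u) (ss w) v = 0 := by
  unfold gammaFun
  have hm := descent_match cs hra hne
  rw [show ss u * v * ss w = ss u * (v * ss w) from mul_assoc _ _ _]
  by_cases hasc : ℓ (ss u * v) = ℓ v + 1
  · rw [psi_simple_mul_asc cs hψ hasc, psi_simple_mul_asc cs hψ (hm.mp hasc)]
    ring
  · have hd1 : ℓ (ss u * v) + 1 = ℓ v := (cs.length_simple_mul v u).resolve_left hasc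
    have hd2 : ℓ (ss u * (v * ss w)) + 1 = ℓ (v * ss w) :=
      (cs.length_simple_mul (v * ss w) u).resolve_left (fun h => hasc (hm.mpr h))
    rw [psi_simple_mul_desc cs hψ hd1, psi_simple_mul_desc cs hψ hd2]
    ring

lemma gamma_comm {u w : B} {v : W} (ψ : W → ℝ) (he : ss u * v = v * ss w) :
    gammaFun ψ (ss u) (ss w) v = 2*ψ v - 2*ψ (v * ss w) := by
  unfold gammaFun
  have h1 : ss u * v * ss w = v := by rw [he, cs.simple_mul_simple_cancel_right]
  rw [h1, he]
  ring

end Gamma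

lemma wordProd_comm_single {α : List B} {j : B}
    (hc : ∀ q ∈ α, ss q * ss j = ss j * ss q) :
    π α * ss j = ss j * π α := by
  induction α with
  | nil => simp
  | cons a α ih =>
    rw [cs.wordProd_cons, mul_assoc, ih (fun q hq => hc q (List.mem_cons_of_mem a hq)),
      ← mul_assoc, hc a List.mem_cons_self, mul_assoc]

lemma core_word (hra : ∀ i j : B, i ≠ j → M i j = 2 ∨ M i j = 0) {w : B}
    (hclique : ∀ p q : B, M w p = 2 → M w q = 2 → p ≠ q → M p q = 2) :
    ∀ n (v : W), ℓ v = n → ss w * v = v * ss w → ℓ (v * ss w) = ℓ v + 1 →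
      ∃ ω : List B, cs.IsReduced ω ∧ π ω = v ∧ ω.Nodup ∧ ∀ i ∈ ω, M i w = 2 := by
  intro n
  induction n using Nat.strong_induction_on with
  | _ n ih =>
    intro v hlv hcomm hasc
    by_cases hv1 : v = 1
    · refine ⟨[], ?_, by simp [hv1], List.nodup_nil, by simp⟩
      show ℓ (π ([] : List B)) = _
      simp
    · have hn1 : 1 ≤ n := by
        rcases Nat.eq_zero_or_pos n with h | h
        · exact absurd (cs.length_eq_zero_iff.mp (h ▸ hlv)) hv1
        · exact h
      obtain ⟨si, hsi⟩ := cs.exists_leftDescent_of_ne_one hv1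
      have hsi' : ℓ (ss si * v) < ℓ v := hsi
      have hsiv : ℓ (ss si * v) + 1 = ℓ v :=
        (cs.length_simple_mul v si).resolve_left (by omega)
      have hsw : si ≠ w := by
        rintro rfl
        rw [hcomm] at hsi'
        omega
      obtain ⟨v', hv'⟩ : ∃ v', v' = ss si * v := ⟨_, rfl⟩
      have hlv' : ℓ v' + 1 = ℓ v := by rw [hv']; exact hsiv
      have hvv' : v = ss si * v' := by
        rw [hv', cs.simple_mul_simple_cancel_left]
      have hdw : ℓ (ss w * (v * ss w)) < ℓ (v * ss w) := by
        have h1 : ss w * (v * ss w) = v := by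
          rw [← hcomm]
          exact cs.simple_mul_simple_cancel_left _
        rw [h1]
        omega
      have hds : ℓ (ss si * (v * ss w)) < ℓ (v * ss w) := by
        have h1 : ss si * (v * ss w) = v' * ss w := by rw [hv', mul_assoc]
        have h2 : ℓ (v' * ss w) ≤ ℓ v' + 1 := by
          have := cs.length_mul_le v' (ss w)
          rw [cs.length_simple] at this
          omega
        rw [h1]
        omega
      have hM2 : M si w = 2 := by
        rcases hra si w hsw with h | h
        · exact h
        · exact (no_two_descents cs hra hsw h hds hdw).elim
      have hcsw : ss si * ss w = ss w * ss si := simple_comm cs hM2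
      have hcomm' : ss w * v' = v' * ss w := by
        rw [hv']
        calc ss w * (ss si * v) = ss si * (ss w * v) := by
              rw [← mul_assoc, ← hcsw, mul_assoc]
        _ = ss si * (v * ss w) := by rw [hcomm]
        _ = (ss si * v) * ss w := by rw [mul_assoc]
      have hasc' : ℓ (v' * ss w) = ℓ v' + 1 := by
        rcases cs.length_mul_simple v' w with h | h
        · exact h
        · exfalso
          have h1 : v * ss w = ss si * (v' * ss w) := by
            rw [← mul_assoc, ← hvv']
          have h2 : ℓ (ss si * (v' * ss w)) ≤ 1 + ℓ (v' * ss w) := by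
            have := cs.length_mul_le (ss si) (v' * ss w)
            rw [cs.length_simple] at this
            omega
          rw [h1] at hasc
          omega
      obtain ⟨ω', hred', hπ', hnd', hlet'⟩ :=
        ih (n-1) (by omega) v' (by omega) hcomm' hasc'
      have hlω' : ω'.length = ℓ v' := by
        have h1 : ℓ (π ω') = ω'.length := hred'
        rw [hπ'] at h1
        omega
      refine ⟨si :: ω', ?_, ?_, ?_, ?_⟩
      · show ℓ (π (si :: ω')) = _
        rw [cs.wordProd_cons, hπ', ← hvv', List.length_cons]
        omega
      · rw [cs.wordProd_cons, hπ', ← hvv']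
      · refine List.nodup_cons.mpr ⟨?_, hnd'⟩
        intro hmem
        obtain ⟨α, β, hαβ⟩ := List.append_of_mem hmem
        have hndα : si ∉ α := by
          rw [hαβ] at hnd'
          have h1 := (List.nodup_append.mp hnd').2.2
          intro hin
          exact h1 si hin si List.mem_cons_self rfl
        have hcα : ∀ q ∈ α, ss q * ss si = ss si * ss q := by
          intro q hq
          have hqw : M q w = 2 := hlet' q (by rw [hαβ]; exact List.mem_append_left _ hq)
          have hqsi : q ≠ si := fun h => hndα (h ▸ hq)
          have hq2 : M q si = 2 := by
            apply hclique q si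
            · rw [M.symmetric]; exact hqw
            · rw [M.symmetric]; exact hM2
            · exact hqsi
          exact simple_comm cs hq2
        have hπα : π ω' = ss si * π (α ++ β) := by
          rw [hαβ, cs.wordProd_append, cs.wordProd_cons, cs.wordProd_append]
          rw [← mul_assoc, wordProd_comm_single cs hcα, mul_assoc]
        have hvshort : v = π (α ++ β) := by
          rw [hvv', ← hπ', hπα]
          exact cs.simple_mul_simple_cancel_left _
        have h1 : ℓ v ≤ (α ++ β).length := by
          rw [hvshort]
          exact cs.length_wordProd_le _
        have h2 : ω'.length = α.length + β.length + 1 := by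
          rw [hαβ, List.length_append, List.length_cons]
          omega
        rw [List.length_append] at h1
        omega
      · intro i hi
        rcases List.mem_cons.mp hi with rfl | h
        · exact hM2
        · exact hlet' i h

lemma centralizer_len_bound [Fintype B]
    (hra : ∀ i j : B, i ≠ j → M i j = 2 ∨ M i j = 0) {w : B}
    (hclique : ∀ p q : B, M w p = 2 → M w q = 2 → p ≠ q → M p q = 2)
    {v : W} (hcomm : ss w * v = v * ss w) :
    ℓ v ≤ Fintype.card B + 1 := by
  rcases cs.length_mul_simple v w with h | h
  · obtain ⟨ω, hred, hπ, hnd, _⟩ := core_word cs hra hclique (ℓ v) v rfl hcomm h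
    have h1 : ℓ (π ω) = ω.length := hred
    rw [hπ] at h1
    have h2 : ω.length ≤ Fintype.card B := hnd.length_le_card
    omega
  · set v2 := v * ss w with hv2
    have hcomm2 : ss w * v2 = v2 * ss w := by
      rw [hv2, ← mul_assoc, hcomm]
    have hasc2 : ℓ (v2 * ss w) = ℓ v2 + 1 := by
      have hc : v2 * ss w = v := by
        rw [hv2, cs.simple_mul_simple_cancel_right]
      rw [hc]
      omega
    obtain ⟨ω, hred, hπ, hnd, _⟩ := core_word cs hra hclique (ℓ v2) v2 rfl hcomm2 hasc2
    have h1 : ℓ (π ω) = ω.length := hred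
    rw [hπ] at h1
    have h2 : ω.length ≤ Fintype.card B := hnd.length_le_card
    omega


section Main

variable [Fintype B] {x : B → ℝ} {ψ : W → ℝ}

lemma support_infinite_of_triple
    (hra : ∀ i j : B, i ≠ j → M i j = 2 ∨ M i j = 0)
    (hψ : ∀ ω : List B, cs.IsReduced ω →
      ψ (cs.wordProd ω) = ∑ i : B, x i * (ω.count i : ℝ))
    {r s t : B} (hrs : M r s = 2) (hrt : M r t = 2) (hst : M s t = 0)
    (hψr : 0 < ψ (ss r)) :
    (Function.support (gammaFun ψ (ss r) (ss r))).Infinite := by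
  have hxr : x r = ψ (ss r) := (psi_simple cs hψ r).symm
  have hcs : Commute (ss r) (ss s) := simple_comm cs hrs
  have hct : Commute (ss r) (ss t) := simple_comm cs hrt
  have hcomm : ∀ n : ℕ, ss r * (ss s * ss t)^n = (ss s * ss t)^n * ss r := by
    intro n
    exact ((hcs.mul_right hct).pow_right n).eq
  have hmem : ∀ n : ℕ, (ss s * ss t)^n ∈ Function.support (gammaFun ψ (ss r) (ss r)) := by
    intro n
    have hg := gamma_comm cs ψ (hcomm n)
    rw [Function.mem_support, hg]
    have hx0 : 0 < x r := by rw [hxr]; exact hψr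
    rcases psi_mul_simple cs hψ ((ss s * ss t)^n) r with h | h <;>
      rw [h] <;>
      intro hcon <;>
      nlinarith
  have hval : ∀ (k : ℕ) (y : ℤ), ((negPerm * refPerm)^k) y = y - k := by
    intro k
    induction k with
    | zero => intro y; simp
    | succ k ih =>
      intro y
      rw [pow_succ]
      have e1 : ((negPerm * refPerm) ^ k * (negPerm * refPerm)) y
          = ((negPerm * refPerm)^k) ((negPerm * refPerm) y) := rfl
      have e2 : (negPerm * refPerm) y = y - 1 := by
        show negPerm (refPerm y) = y - 1
        simp
        ring
      rw [e1, e2, ih]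
      push_cast
      ring
  have hts : dihHom cs hra hst (ss s * ss t) = negPerm * refPerm := by
    have hts' : ¬ t = s := by
      rintro rfl
      rw [M.diagonal] at hst
      omega
    rw [map_mul, dihHom_simple cs hra hst, dihHom_simple cs hra hst]
    have h1 : dihF s t s = negPerm := by simp [dihF]
    have h2 : dihF s t t = refPerm := by simp [dihF, hts']
    rw [h1, h2]
  have hinj : Function.Injective (fun n : ℕ => (ss s * ss t)^n) := by
    intro m n hmn
    have h1 := congrArg (dihHom cs hra hst) hmn
    simp only [map_pow, hts] at h1
    have h2 := congrArg (fun g : Equiv.Perm ℤ => g 0) h1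
    simp only [hval] at h2
    omega
  exact Set.infinite_of_injective_forall_mem hinj hmem

lemma support_finite
    (hra : ∀ i j : B, i ≠ j → M i j = 2 ∨ M i j = 0)
    (hx : ∀ i : B, 0 ≤ x i)
    (hψ : ∀ ω : List B, cs.IsReduced ω →
      ψ (cs.wordProd ω) = ∑ i : B, x i * (ω.count i : ℝ))
    (hproper : ∀ N : ℝ, {w : W | ψ w ≤ N}.Finite)
    (hno : ¬ ∃ r s t : B, M r s = 2 ∧ M r t = 2 ∧ M s t = 0 ∧ 0 < ψ (cs.simple r))
    (u w : B) :
    (Function.support (gammaFun ψ (ss u) (ss w))).Finite := by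
  rcases Set.eq_empty_or_nonempty (Function.support (gammaFun ψ (ss u) (ss w)))
    with he | ⟨v₀, hv₀⟩
  · rw [he]; exact Set.finite_empty
  · have hv₀' : gammaFun ψ (ss u) (ss w) v₀ ≠ 0 := hv₀
    have he₀ : ss u * v₀ = v₀ * ss w := by
      by_contra hne
      exact hv₀' (gamma_eq_zero_of_ne cs hra hψ hne)
    have hxw : 0 < x w := by
      have hg := gamma_comm cs ψ he₀
      have hxw' : x w ≠ 0 := by
        intro h0
        apply hv₀'
        rcases psi_mul_simple cs hψ v₀ w with h | h <;> rw [hg, h, h0] <;> ring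
      exact lt_of_le_of_ne (hx w) (Ne.symm hxw')
    have hψw : 0 < ψ (ss w) := by rw [psi_simple cs hψ w]; exact hxw
    have hclique : ∀ p q : B, M w p = 2 → M w q = 2 → p ≠ q → M p q = 2 := by
      intro p q hp hq hpq
      rcases hra p q hpq with h | h
      · exact h
      · exact absurd ⟨w, p, q, hp, hq, h, hψw⟩ hno
    set K : ℝ := ((Fintype.card B + 1 : ℕ) : ℝ) * ∑ i : B, x i with hK
    apply Set.Finite.subset (Set.Finite.image (fun c => v₀ * c) (hproper K))
    intro v hv
    have hvne : gammaFun ψ (ss u) (ss w) v ≠ 0 := hv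
    have hev : ss u * v = v * ss w := by
      by_contra hne
      exact hvne (gamma_eq_zero_of_ne cs hra hψ hne)
    have h1 : ss w * v₀⁻¹ = v₀⁻¹ * ss u := by
      apply mul_left_cancel (a := v₀)
      rw [← mul_assoc, ← he₀]
      group
    have hcm : ss w * (v₀⁻¹ * v) = (v₀⁻¹ * v) * ss w := by
      calc ss w * (v₀⁻¹ * v) = (ss w * v₀⁻¹) * v := by rw [mul_assoc]
      _ = v₀⁻¹ * (ss u * v) := by rw [h1, mul_assoc]
      _ = v₀⁻¹ * (v * ss w) := by rw [hev]
      _ = (v₀⁻¹ * v) * ss w := by rw [mul_assoc]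
    have hlen := centralizer_len_bound cs hra hclique hcm
    have hψle := psi_le cs hx hψ (v₀⁻¹ * v)
    have hsum0 : 0 ≤ ∑ i : B, x i := Finset.sum_nonneg (fun i _ => hx i)
    refine ⟨v₀⁻¹ * v, ?_, by group⟩
    show ψ (v₀⁻¹ * v) ≤ K
    calc ψ (v₀⁻¹ * v) ≤ (ℓ (v₀⁻¹ * v) : ℝ) * ∑ i : B, x i := hψle
    _ ≤ K := by
        rw [hK]
        apply mul_le_mul_of_nonneg_right _ hsum0
        exact_mod_cast hlen

end Main


end CGamma

/-- Let `W = ⟨S|M⟩` be a right-angled finite rank Coxeter system (all off-diagonal labels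
are `2` or `∞`, the latter encoded by `0`), let `x : S → [0,∞)` be weights and let `ψ_x` be
the weighted word length, `ψ_x(w) = Σ_i x_i·#{l : w_l = s_i}` for a reduced expression
`w = w_1⋯w_k`.  Suppose `ψ_x` is proper.  Then: all functions `γ_{u,w}^{ψ_x}` (`u, w ∈ S`)
have finite support if and only if there are no generators `r, s, t ∈ S` with
`m_{r,s} = m_{r,t} = 2`, `m_{s,t} = ∞` and `ψ_x(r) > 0`. -/
theorem rightAngled_gamma_finite_support_iff
    {B : Type*} [Fintype B] [DecidableEq B] {M : CoxeterMatrix B}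
    {W : Type*} [Group W] (cs : CoxeterSystem M W)
    (hra : ∀ i j : B, i ≠ j → M i j = 2 ∨ M i j = 0)
    (x : B → ℝ) (hx : ∀ i : B, 0 ≤ x i)
    (ψ : W → ℝ)
    (hψ : ∀ ω : List B, cs.IsReduced ω →
      ψ (cs.wordProd ω) = ∑ i : B, x i * (ω.count i : ℝ))
    (hproper : ∀ N : ℝ, {w : W | ψ w ≤ N}.Finite) :
    (∀ u w : B,
        (Function.support (gammaFun ψ (cs.simple u) (cs.simple w))).Finite) ↔
      ¬ ∃ r s t : B, M r s = 2 ∧ M r t = 2 ∧ M s t = 0 ∧ 0 < ψ (cs.simple r) := by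
  classical
  constructor
  · rintro hfin ⟨r, s, t, hrs, hrt, hst, hψr⟩
    exact CGamma.support_infinite_of_triple cs hra hψ hrs hrt hst hψr (hfin r r)
  · intro hno u w
    exact CGamma.support_finite cs hra hx hψ hproper hno u w
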